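/- (Corollary 2, uplink power-scaling law.) Let ω, E_u, η, L, γ, K_u be positive real numbers. For each positive integer M_a define R(M_a) = ω·log₂( 1 + ( (E_u/M_a)·η·(M_a·L·γ)² ) / ( (E_u/M_a)·η·M_a·K_u·L·γ + M_a·L·γ ) ). Then as M_a → ∞, R(M_a) converges to ω·log₂(1 + E_u·η·L·γ). -/

import Mathlib

open Filter

/-- **Corollary 2** (uplink power-scaling law). With the uplink power scaled as
`ρ = E_u/M_a`, the uplink SE
`R(M_a) = ω·log₂(1 + ((E_u/M_a)·η·(M_a·L·γ)²)/((E_u/M_a)·η·M_a·K_u·L·γ + M_a·L·γ))`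
converges, as `M_a → ∞`, to `ω·log₂(1 + E_u·η·L·γ)`. -/
theorem uplink_power_scaling_law
    (ω Eu η L γ Ku : ℝ) (hω : 0 < ω) (hEu : 0 < Eu) (hη : 0 < η)
    (hL : 0 < L) (hγ : 0 < γ) (hKu : 0 < Ku) :
    Tendsto (fun Ma : ℕ =>
        ω * Real.logb 2 (1 +
          (Eu / (Ma : ℝ)) * η * ((Ma : ℝ) * L * γ) ^ 2 /
            ((Eu / (Ma : ℝ)) * η * (Ma : ℝ) * Ku * L * γ + (Ma : ℝ) * L * γ)))
      atTop (nhds (ω * Real.logb 2 (1 + Eu * η * L * γ))) := by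
  set c := Eu * η * Ku with hc
  have hcpos : 0 < c := by positivity
  -- limit of the SINR
  have h0 : Tendsto (fun Ma : ℕ => c / (Ma : ℝ)) atTop (nhds 0) :=
    tendsto_const_div_atTop_nhds_zero_nat c
  have h1 : Tendsto (fun Ma : ℕ => Eu * η * L * γ / (c / (Ma : ℝ) + 1)) atTop
      (nhds (Eu * η * L * γ)) := by
    have hh : Tendsto (fun Ma : ℕ => c / (Ma : ℝ) + 1) atTop (nhds (0 + 1)) :=
      h0.add tendsto_const_nhds
    have hconst : Tendsto (fun _ : ℕ => Eu * η * L * γ) atTop (nhds (Eu * η * L * γ)) :=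
      tendsto_const_nhds
    have := hconst.div hh (by norm_num)
    simp only [zero_add, div_one] at this
    exact this
  have h2 : Tendsto (fun Ma : ℕ =>
      (Eu / (Ma : ℝ)) * η * ((Ma : ℝ) * L * γ) ^ 2 /
        ((Eu / (Ma : ℝ)) * η * (Ma : ℝ) * Ku * L * γ + (Ma : ℝ) * L * γ)) atTop
      (nhds (Eu * η * L * γ)) := by
    refine h1.congr' ?_
    filter_upwards [eventually_ge_atTop 1] with Ma hMa
    have hM : (0 : ℝ) < (Ma : ℝ) := by exact_mod_cast hMa
    have hden : (0 : ℝ) < c / (Ma : ℝ) + 1 := by positivity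
    field_simp
    ring
  -- continuity of the outer map
  have hpos : (0 : ℝ) < 1 + Eu * η * L * γ := by positivity
  have hcont : ContinuousAt (fun x : ℝ => ω * Real.logb 2 (1 + x)) (Eu * η * L * γ) := by
    refine continuousAt_const.mul ?_
    have : ContinuousAt (Real.logb 2) (1 + Eu * η * L * γ) :=
      Real.continuousAt_logb hpos.ne'
    exact this.comp (continuousAt_const.add continuousAt_id)
  exact hcont.tendsto.comp h2
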